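/- For every real β ≥ 1: (even case) for every integer k ≥ 0 one has α(2k−1) < s(2k, β); (odd case) for every integer k ≥ 0 such that β·(H(2k) − 1) < H(2k) + 1, one has α(2k) < s(2k+1, β). -/

import Mathlib

/-- Pell numbers: P 0 = 0, P 1 = 1, P (m+2) = 2·P (m+1) + P m. -/
def pell : ℕ → ℕ
  | 0 => 0
  | 1 => 1
  | m + 2 => 2 * pell (m + 1) + pell m

/-- Half-companion Pell numbers: H 0 = 1, H 1 = 1, H (m+2) = 2·H (m+1) + H m. -/
def hpell : ℕ → ℕ
  | 0 => 1
  | 1 => 1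
  | m + 2 => 2 * hpell (m + 1) + hpell m

/-- For m ≥ -1, γ(m, β): for even m = 2k, γ = H(2k+2)/((β+1)·P(2k+1)); for odd
m = 2k−1, γ = 2·P(2k+1)/((β+1)·H(2k) − (β−1)).  (In particular γ(−1, β) = 1.) -/
noncomputable def gam (m : ℤ) (β : ℝ) : ℝ :=
  if m % 2 = 0 then
    (hpell (m + 2).toNat : ℝ) / ((β + 1) * (pell (m + 1).toNat : ℝ))
  else
    2 * (pell (m + 2).toNat : ℝ) / ((β + 1) * (hpell (m + 1).toNat : ℝ) - (β - 1))

/-- α(2k) = H(2k+2)/H(2k), α(2k−1) = P(2k+1)/P(2k−1) for k ≥ 1, α(−1) = 1. -/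
noncomputable def al (m : ℤ) : ℝ :=
  if m = -1 then 1
  else if m % 2 = 0 then (hpell (m + 2).toNat : ℝ) / (hpell m.toNat : ℝ)
  else (pell (m + 2).toNat : ℝ) / (pell m.toNat : ℝ)

/-- s(m, β) = γ(m−1, β)·α(m)/γ(m, β). -/
noncomputable def sfun (m : ℤ) (β : ℝ) : ℝ := gam (m - 1) β * al m / gam m β

lemma pell_pos : ∀ n : ℕ, 0 < pell (n+1)
  | 0 => Nat.one_pos
  | n+1 => by have := pell_pos n; simp only [pell]; omega

lemma hpell_pos : ∀ n : ℕ, 0 < hpell n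
  | 0 => Nat.one_pos
  | 1 => Nat.one_pos
  | n+2 => by have := hpell_pos (n+1); simp only [hpell]; omega

lemma pstep : ∀ n : ℕ, pell (n+1) = pell n + hpell n ∧ hpell (n+1) = 2*pell n + hpell n
  | 0 => by simp [pell, hpell]
  | n+1 => by
    obtain ⟨h1, h2⟩ := pstep n
    simp only [pell, hpell]
    omega

lemma key : ∀ n : ℕ, ((hpell n : ℤ))^2 = 2*((pell n : ℤ))^2 + (-1)^n
  | 0 => by simp [pell, hpell]
  | n+1 => by
    have ih := key n
    obtain ⟨h1, h2⟩ := pstep n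
    have e1 : ((pell (n+1) : ℤ)) = (pell n : ℤ) + (hpell n : ℤ) := by exact_mod_cast h1
    have e2 : ((hpell (n+1) : ℤ)) = 2*(pell n : ℤ) + (hpell n : ℤ) := by exact_mod_cast h2
    rw [e1, e2, pow_succ]
    linear_combination (-1 : ℤ) * ih

lemma id2 (k : ℕ) : 2 * pell (2*k+1)^2 = hpell (2*k+1)^2 + 1 := by
  have h := key (2*k+1)
  have hs : ((-1:ℤ))^(2*k+1) = -1 := by simp [pow_succ, pow_mul]
  rw [hs] at h
  zify
  linarith

lemma id1 (j : ℕ) : 2 * pell (2*j+3) * pell (2*j+1) = hpell (2*j+2)^2 + 1 := by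
  have hk := key (2*j+2)
  have hs : ((-1:ℤ))^(2*j+2) = 1 := by simp [pow_add, pow_mul]
  rw [hs] at hk
  obtain ⟨p1, _⟩ := pstep (2*j+2)
  obtain ⟨p0, h0⟩ := pstep (2*j+1)
  simp only [show 2*j+2+1 = 2*j+3 by omega] at p1
  simp only [show 2*j+1+1 = 2*j+2 by omega] at p0 h0
  have A : pell (2*j+1) + pell (2*j+2) = hpell (2*j+2) := by omega
  have e3 : ((pell (2*j+3) : ℤ)) = (pell (2*j+2):ℤ) + (hpell (2*j+2):ℤ) := by exact_mod_cast p1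
  have eA : ((pell (2*j+1) : ℤ)) + (pell (2*j+2):ℤ) = (hpell (2*j+2):ℤ) := by exact_mod_cast A
  zify
  linear_combination 2*(pell (2*j+1):ℤ)*e3 + (2*(pell (2*j+2):ℤ)+2*(hpell (2*j+2):ℤ))*eA + hk

lemma id3 (k : ℕ) : hpell (2*k) * hpell (2*k+2) = hpell (2*k+1)^2 + 2 := by
  have h2 := id2 k
  obtain ⟨p0, h0⟩ := pstep (2*k)
  obtain ⟨_, h1⟩ := pstep (2*k+1)
  simp only [show 2*k+1+1 = 2*k+2 by omega] at h1
  have A : hpell (2*k) + hpell (2*k+1) = 2 * pell (2*k+1) := by omega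
  have eA : ((hpell (2*k):ℤ)) + (hpell (2*k+1):ℤ) = 2*(pell (2*k+1):ℤ) := by exact_mod_cast A
  have e1 : ((hpell (2*k+2):ℤ)) = 2*(pell (2*k+1):ℤ) + (hpell (2*k+1):ℤ) := by exact_mod_cast h1
  have eh2 : 2 * ((pell (2*k+1):ℤ))^2 = (hpell (2*k+1):ℤ)^2 + 1 := by exact_mod_cast h2
  zify
  linear_combination (hpell (2*k):ℤ)*e1 + (2*(pell (2*k+1):ℤ)+(hpell (2*k+1):ℤ))*eA + 2*eh2

lemma gam_even (β : ℝ) (k : ℕ) :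
    gam (2*(k:ℤ)) β = (hpell (2*k+2) : ℝ) / ((β+1) * (pell (2*k+1) : ℝ)) := by
  have h0 : (2*(k:ℤ)) % 2 = 0 := by omega
  have t1 : (2*(k:ℤ)+2).toNat = 2*k+2 := by omega
  have t2 : (2*(k:ℤ)+1).toNat = 2*k+1 := by omega
  rw [gam, if_pos h0, t1, t2]

lemma gam_odd (β : ℝ) (k : ℕ) :
    gam (2*(k:ℤ)-1) β = 2 * (pell (2*k+1) : ℝ) / ((β+1) * (hpell (2*k) : ℝ) - (β-1)) := by
  have h0 : ¬ ((2*(k:ℤ)-1) % 2 = 0) := by omega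
  have t1 : (2*(k:ℤ)-1+2).toNat = 2*k+1 := by omega
  have t2 : (2*(k:ℤ)-1+1).toNat = 2*k := by omega
  rw [gam, if_neg h0, t1, t2]

lemma gam_odd' (β : ℝ) (k : ℕ) :
    gam (2*(k:ℤ)+1) β = 2 * (pell (2*k+3) : ℝ) / ((β+1) * (hpell (2*k+2) : ℝ) - (β-1)) := by
  have h0 : ¬ ((2*(k:ℤ)+1) % 2 = 0) := by omega
  have t1 : (2*(k:ℤ)+1+2).toNat = 2*k+3 := by omega
  have t2 : (2*(k:ℤ)+1+1).toNat = 2*k+2 := by omega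
  rw [gam, if_neg h0, t1, t2]

lemma al_even (k : ℕ) : al (2*(k:ℤ)) = (hpell (2*k+2) : ℝ) / (hpell (2*k) : ℝ) := by
  have hne : (2*(k:ℤ)) ≠ -1 := by omega
  have h0 : (2*(k:ℤ)) % 2 = 0 := by omega
  have t1 : (2*(k:ℤ)+2).toNat = 2*k+2 := by omega
  have t2 : (2*(k:ℤ)).toNat = 2*k := by omega
  rw [al, if_neg hne, if_pos h0, t1, t2]

lemma al_odd' (k : ℕ) : al (2*(k:ℤ)+1) = (pell (2*k+3) : ℝ) / (pell (2*k+1) : ℝ) := by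
  have hne : (2*(k:ℤ)+1) ≠ -1 := by omega
  have h0 : ¬ ((2*(k:ℤ)+1) % 2 = 0) := by omega
  have t1 : (2*(k:ℤ)+1+2).toNat = 2*k+3 := by omega
  have t2 : (2*(k:ℤ)+1).toNat = 2*k+1 := by omega
  rw [al, if_neg hne, if_neg h0, t1, t2]

theorem stmt_5 (β : ℝ) (hβ : 1 ≤ β) :
    (∀ k : ℕ, al (2*(k:ℤ)-1) < sfun (2*(k:ℤ)) β) ∧
    (∀ k : ℕ, β * ((hpell (2*k) : ℝ) - 1) < (hpell (2*k) : ℝ) + 1 →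
      al (2*(k:ℤ)) < sfun (2*(k:ℤ)+1) β) := by
  have hb : (0:ℝ) < β + 1 := by linarith
  constructor
  · intro k
    have hp : (0:ℝ) < (pell (2*k+1) : ℝ) := by exact_mod_cast pell_pos (2*k)
    have hh : (0:ℝ) < (hpell (2*k) : ℝ) := by exact_mod_cast hpell_pos (2*k)
    have hh2 : (0:ℝ) < (hpell (2*k+2) : ℝ) := by exact_mod_cast hpell_pos (2*k+2)
    have hh1 : (1:ℝ) ≤ (hpell (2*k) : ℝ) := by exact_mod_cast hpell_pos (2*k)
    have hD : (0:ℝ) < (β+1)*(hpell (2*k) : ℝ) - (β-1) := by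
      nlinarith [mul_le_mul_of_nonneg_left hh1 (le_of_lt hb)]
    have hsf : sfun (2*(k:ℤ)) β
        = 2*(β+1)*(pell (2*k+1) : ℝ)^2
          / ((hpell (2*k) : ℝ) * ((β+1)*(hpell (2*k) : ℝ) - (β-1))) := by
      rw [sfun, gam_odd, al_even, gam_even]
      field_simp
    rw [hsf]
    cases k with
    | zero =>
      norm_num [pell, hpell, al]
      linarith
    | succ j =>
      have harg : (2*((j+1:ℕ):ℤ)-1) = 2*(j:ℤ)+1 := by push_cast; ring
      rw [harg, al_odd' j]
      simp only [show 2*(j+1)+1 = 2*j+3 from by ring, show 2*(j+1) = 2*j+2 from by ring] at *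
      have hpa : (0:ℝ) < (pell (2*j+1) : ℝ) := by exact_mod_cast pell_pos (2*j)
      have hid : (2:ℝ)*(pell (2*j+3):ℝ)*(pell (2*j+1):ℝ) = (hpell (2*j+2):ℝ)^2+1 := by
        exact_mod_cast id1 j
      rw [div_lt_div_iff₀ hpa (mul_pos hh hD)]
      have e : 2*(β+1)*(pell (2*j+3):ℝ)^2*(pell (2*j+1):ℝ)
            - (pell (2*j+3):ℝ)*((hpell (2*j+2):ℝ)*((β+1)*(hpell (2*j+2):ℝ)-(β-1)))
          = (pell (2*j+3):ℝ)*((β+1)+(β-1)*(hpell (2*j+2):ℝ)) := by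
        linear_combination (β+1)*(pell (2*j+3):ℝ)*hid
      have hpos : (0:ℝ) < (pell (2*j+3):ℝ)*((β+1)+(β-1)*(hpell (2*j+2):ℝ)) := by
        have h1 : (0:ℝ) ≤ (β-1)*(hpell (2*j+2):ℝ) :=
          mul_nonneg (by linarith) (le_of_lt hh)
        have h2 : (0:ℝ) < (pell (2*j+3):ℝ) := by exact_mod_cast pell_pos (2*j+2)
        nlinarith
      linarith
  · intro k hk
    have hp : (0:ℝ) < (pell (2*k+1) : ℝ) := by exact_mod_cast pell_pos (2*k)
    have hp3 : (0:ℝ) < (pell (2*k+3) : ℝ) := by exact_mod_cast pell_pos (2*k+2)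
    have hh : (0:ℝ) < (hpell (2*k) : ℝ) := by exact_mod_cast hpell_pos (2*k)
    have hh2 : (0:ℝ) < (hpell (2*k+2) : ℝ) := by exact_mod_cast hpell_pos (2*k+2)
    have hh21 : (1:ℝ) ≤ (hpell (2*k+2) : ℝ) := by exact_mod_cast hpell_pos (2*k+2)
    have hD2 : (0:ℝ) < (β+1)*(hpell (2*k+2) : ℝ) - (β-1) := by
      nlinarith [mul_le_mul_of_nonneg_left hh21 (le_of_lt hb)]
    have hsf : sfun (2*(k:ℤ)+1) β
        = (hpell (2*k+2):ℝ) * ((β+1)*(hpell (2*k+2):ℝ) - (β-1))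
          / (2*(β+1)*(pell (2*k+1):ℝ)^2) := by
      rw [sfun, show (2*(k:ℤ)+1-1) = 2*(k:ℤ) from by ring, gam_even, al_odd', gam_odd']
      field_simp
    rw [hsf, al_even k]
    have hid2 : (2:ℝ)*(pell (2*k+1):ℝ)^2 = (hpell (2*k+1):ℝ)^2+1 := by exact_mod_cast id2 k
    have hid3 : (hpell (2*k):ℝ)*(hpell (2*k+2):ℝ) = (hpell (2*k+1):ℝ)^2+2 := by
      exact_mod_cast id3 k
    rw [div_lt_div_iff₀ hh (by positivity)]
    have e : (hpell (2*k+2):ℝ)*((β+1)*(hpell (2*k+2):ℝ)-(β-1))*(hpell (2*k):ℝ)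
          - (hpell (2*k+2):ℝ)*(2*(β+1)*(pell (2*k+1):ℝ)^2)
        = (hpell (2*k+2):ℝ)*((β+1) - (β-1)*(hpell (2*k):ℝ)) := by
      linear_combination (β+1)*(hpell (2*k+2):ℝ)*hid3 - (β+1)*(hpell (2*k+2):ℝ)*hid2
    have hk' : (β-1)*(hpell (2*k):ℝ) < β+1 := by nlinarith
    have hpos : (0:ℝ) < (hpell (2*k+2):ℝ)*((β+1) - (β-1)*(hpell (2*k):ℝ)) := by
      nlinarith
    linarith
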